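/- For every integer n ≥ 2 there exist real parameters γ, β such that f_n(γ,β) > 0. Consequently, at any maximizer (γ*,β*) of f_n one has f_n(γ*,β*) > 0, and hence the edge correlation M_{ij} = 1 − 2·(1/2 + f_n(γ*,β*)) = −2·f_n(γ*,β*) of the optimal level-1 QAOA state on K_{2n} is strictly negative for every edge (i,j). -/

import Mathlib

open Real

set_option maxHeartbeats 800000

/-- The deviation from `1/2` of the per-edge expectation value of the level-1 QAOA
for MAX-CUT on the complete graph `K_{2n}`. -/
noncomputable def qaoaF (n : ℕ) (γ β : ℝ) : ℝ :=
  (1 / 2) * sin (4 * β) * sin γ * cos γ ^ (2 * n - 2)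
    - (1 / 4) * sin (2 * β) ^ 2 * (1 - cos (2 * γ) ^ (2 * n - 2))

private lemma key (m : ℕ) (hm2 : 2 ≤ m) :
    0 < (1 / 2) * sin (4 * (1/(7*(m:ℝ)))) * sin (1/(7*(m:ℝ))) * cos (1/(7*(m:ℝ))) ^ m
    - (1 / 4) * sin (2 * (1/(7*(m:ℝ)))) ^ 2 * (1 - cos (2 * (1/(7*(m:ℝ)))) ^ m) := by
  have hmR : (2:ℝ) ≤ m := by exact_mod_cast hm2
  set t : ℝ := 1/(7*(m:ℝ)) with ht
  have htpos : 0 < t := by positivity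
  have htm : (m:ℝ) * t = 1/7 := by
    rw [ht, mul_one_div, div_eq_div_iff (ne_of_gt (by linarith)) (by norm_num)]; ring
  have htle : t ≤ 1/14 := by
    rw [ht]
    rw [div_le_div_iff₀ (by positivity) (by norm_num)]
    nlinarith
  have hpi : (3:ℝ) < π := pi_gt_three
  have hpi2 : π < 3.15 := by
    have := pi_lt_d2
    linarith
  -- sin (4t) ≥ 8t/π
  have h1 : 2/π * (4*t) ≤ sin (4*t) := mul_le_sin (by positivity) (by nlinarith)
  -- sin t ≥ 2t/π
  have h2 : 2/π * t ≤ sin t := mul_le_sin htpos.le (by nlinarith)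
  -- cos t ^ m ≥ 1/2
  have hc1 : 1 - t^2/2 ≤ cos t := one_sub_sq_div_two_le_cos
  have ht2 : (m:ℝ) * t^2 = t/7 := by nlinarith [htm]
  have hcm : (1:ℝ)/2 ≤ cos t ^ m := by
    have hb : 1 + (m:ℝ) * (-(t^2/2)) ≤ (1 + (-(t^2/2)))^m := by
      apply one_add_mul_le_pow
      nlinarith
    have hp : (1 + (-(t^2/2)))^m ≤ cos t ^ m := by
      apply pow_le_pow_left₀ (by nlinarith) (by linarith)
    nlinarith
  -- 1 - cos(2t)^m ≤ 2t/7
  have hc2 : 1 - (2*t)^2/2 ≤ cos (2*t) := one_sub_sq_div_two_le_cos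
  have hc2m : 1 - 2*t/7 ≤ cos (2*t) ^ m := by
    have hb : 1 + (m:ℝ) * (-(2*t^2)) ≤ (1 + (-(2*t^2)))^m := by
      apply one_add_mul_le_pow
      nlinarith
    have hp : (1 + (-(2*t^2)))^m ≤ cos (2*t) ^ m := by
      apply pow_le_pow_left₀ (by nlinarith) (by nlinarith)
    nlinarith
  have hc2m1 : cos (2*t) ^ m ≤ 1 := by
    apply pow_le_one₀ ?_ (cos_le_one _)
    nlinarith
  -- sin(2t)^2 ≤ 4t^2
  have hs2 : sin (2*t) ^ 2 ≤ 4*t^2 := by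
    have h0 : 0 ≤ sin (2*t) := sin_nonneg_of_nonneg_of_le_pi (by positivity) (by nlinarith)
    have hle : sin (2*t) ≤ 2*t := sin_le (by positivity)
    nlinarith
  have hinv : 1/(3.15:ℝ) ≤ 1/π := one_div_le_one_div_of_le (by linarith) hpi2.le
  have h1' : (5/2)*t ≤ sin (4*t) := by
    refine le_trans ?_ h1
    have he : 2/π*(4*t) = 8*t*(1/π) := by ring
    rw [he]
    nlinarith [mul_le_mul_of_nonneg_left hinv (by positivity : (0:ℝ) ≤ 8*t)]
  have h2' : (3/5)*t ≤ sin t := by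
    refine le_trans ?_ h2
    have he : 2/π*t = 2*t*(1/π) := by ring
    rw [he]
    nlinarith [mul_le_mul_of_nonneg_left hinv (by positivity : (0:ℝ) ≤ 2*t)]
  have hs4pos : 0 ≤ sin (4*t) := le_trans (by positivity) h1'
  have hspos : 0 ≤ sin t := le_trans (by positivity) h2'
  have hcmpos : (0:ℝ) ≤ cos t ^ m := by linarith
  nlinarith [mul_le_mul h1' h2' (by positivity) hs4pos,
    mul_le_mul (mul_le_mul h1' h2' (by positivity) hs4pos) hcm (by norm_num) (by positivity),
    mul_le_mul hs2 (by linarith : 1 - cos (2*t)^m ≤ 2*t/7) (by linarith) (by positivity),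
    sq_nonneg t, mul_pos htpos htpos, mul_pos (mul_pos htpos htpos) htpos]

/-- For every `n ≥ 2` there exist `γ, β` with `f_n(γ,β) > 0`; consequently, at any
maximizer `(γ*,β*)` of `f_n` one has `f_n(γ*,β*) > 0`, hence the edge correlation
`M_{ij} = -2·f_n(γ*,β*)` of the optimal level-1 QAOA state on `K_{2n}` is strictly
negative. -/
theorem qaoaF_pos_at_max (n : ℕ) (hn : 2 ≤ n) :
    (∃ γ β : ℝ, 0 < qaoaF n γ β) ∧
      ∀ γStar βStar : ℝ, (∀ γ β : ℝ, qaoaF n γ β ≤ qaoaF n γStar βStar) →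
        0 < qaoaF n γStar βStar ∧ -2 * qaoaF n γStar βStar < 0 := by
  have hex : ∃ γ β : ℝ, 0 < qaoaF n γ β := by
    refine ⟨1/(7*((2*n-2 : ℕ):ℝ)), 1/(7*((2*n-2 : ℕ):ℝ)), ?_⟩
    unfold qaoaF
    exact key (2*n-2) (by omega)
  refine ⟨hex, fun γStar βStar hmax => ?_⟩
  obtain ⟨γ, β, hγβ⟩ := hex
  have h := hmax γ β
  constructor <;> linarith
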